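/- Let n ≥ 1, ρ > 0, and let u be a C² function on the closed Euclidean ball of radius ρ centered at the origin in ℝⁿ, with u ≥ 0 and Δu ≥ (2/n)·u² on the ball. Then there exists a constant C > 0 depending only on n such that u(x) ≤ C·ρ²/(ρ² − |x|²)² for every x with |x| < ρ. -/

import Mathlib

open Set Filter Metric



open Set Filter Metric


section helpers
variable {E' : Type*} [NormedAddCommGroup E'] [NormedSpace ℝ E']

lemma hasDerivAt_line (x₀ v : E') (t : ℝ) :
    HasDerivAt (fun t : ℝ => x₀ + t • v) v t := by
  simpa using ((hasDerivAt_id t).smul_const v).const_add x₀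

lemma line_contDiffAt {u : E' → ℝ} {x₀ : E'} (v : E') (hu : ContDiffAt ℝ 2 u x₀) :
    ContDiffAt ℝ 2 (fun t : ℝ => u (x₀ + t • v)) 0 := by
  have hL : ContDiff ℝ 2 (fun t : ℝ => x₀ + t • v) :=
    contDiff_const.add (contDiff_id.smul contDiff_const)
  have h0 : (x₀ + (0:ℝ) • v) = x₀ := by simp
  have hu' : ContDiffAt ℝ 2 u (x₀ + (0:ℝ) • v) := by rwa [h0]
  exact hu'.comp 0 hL.contDiffAt

lemma line_hasDerivAt_eventually {u : E' → ℝ} {x₀ : E'} (v : E') (hu : ContDiffAt ℝ 2 u x₀) :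
    ∀ᶠ t in nhds (0:ℝ), HasDerivAt (fun s : ℝ => u (x₀ + s • v))
      (fderiv ℝ u (x₀ + t • v) v) t := by
  obtain ⟨s, hs, hus⟩ := hu.contDiffOn (m := 2) le_rfl (by simp)
  obtain ⟨T, hTs, hTo, hxT⟩ := _root_.mem_nhds_iff.mp hs
  have hL0 : (x₀ + (0:ℝ) • v) = x₀ := by simp
  have hcont : Continuous (fun t : ℝ => x₀ + t • v) :=
    continuous_const.add (continuous_id.smul continuous_const)
  have hev : ∀ᶠ t in nhds (0:ℝ), (x₀ + t • v) ∈ T := by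
    exact hcont.continuousAt.preimage_mem_nhds (by rw [hL0]; exact hTo.mem_nhds hxT)
  filter_upwards [hev] with t ht
  have hdiff : DifferentiableAt ℝ u (x₀ + t • v) :=
    ((hus.mono hTs).contDiffAt (hTo.mem_nhds ht)).differentiableAt (by norm_num)
  exact hdiff.hasFDerivAt.comp_hasDerivAt t (hasDerivAt_line x₀ v t)

lemma line_fderiv_hasDerivAt {u : E' → ℝ} {x₀ : E'} (v : E') (hu : ContDiffAt ℝ 2 u x₀) :
    HasDerivAt (fun t : ℝ => fderiv ℝ u (x₀ + t • v) v)
      (fderiv ℝ (fun y => fderiv ℝ u y v) x₀ v) 0 := by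
  have hL0 : (x₀ + (0:ℝ) • v) = x₀ := by simp
  have hf' : ContDiffAt ℝ 1 (fderiv ℝ u) x₀ := hu.fderiv_right (by norm_num)
  have hDf : HasFDerivAt (fderiv ℝ u) (fderiv ℝ (fderiv ℝ u) x₀) x₀ :=
    (hf'.differentiableAt (by norm_num)).hasFDerivAt
  have h1 : HasDerivAt (fun t : ℝ => fderiv ℝ u (x₀ + t • v))
      (fderiv ℝ (fderiv ℝ u) x₀ v) 0 := by
    have hDf' : HasFDerivAt (fderiv ℝ u) (fderiv ℝ (fderiv ℝ u) x₀) (x₀ + (0:ℝ) • v) := by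
      rwa [hL0]
    have := hDf'.comp_hasDerivAt 0 (hasDerivAt_line x₀ v 0)
    exact this
  have h2 : HasDerivAt (fun t : ℝ => fderiv ℝ u (x₀ + t • v) v)
      (fderiv ℝ (fderiv ℝ u) x₀ v v) 0 := by
    simpa using h1.clm_apply (hasDerivAt_const 0 v)
  have h3 : HasFDerivAt (fun y => fderiv ℝ u y v)
      ((ContinuousLinearMap.apply ℝ ℝ v).comp (fderiv ℝ (fderiv ℝ u) x₀)) x₀ :=
    (ContinuousLinearMap.apply ℝ ℝ v).hasFDerivAt.comp x₀ hDf
  have h4 : fderiv ℝ (fun y => fderiv ℝ u y v) x₀ v = fderiv ℝ (fderiv ℝ u) x₀ v v := by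
    rw [h3.fderiv]; rfl
  rw [h4]; exact h2

lemma second_deriv_nonpos_of_isLocalMax {g : ℝ → ℝ} (hg : ContDiffAt ℝ 2 g 0)
    (hmax : IsLocalMax g 0) : deriv (deriv g) 0 ≤ 0 := by
  by_contra h
  push_neg at h
  obtain ⟨s, hs, hgs⟩ := hg.contDiffOn (m := 2) le_rfl (by simp)
  obtain ⟨t, hts, hto, h0t⟩ := _root_.mem_nhds_iff.mp hs
  have hgt : ContDiffOn ℝ 2 g t := hgs.mono hts
  have hg1 : ContDiffOn ℝ 1 (deriv g) t :=
    hgt.deriv_of_isOpen hto (by norm_num)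
  have hdd : ContinuousOn (deriv (deriv g)) t :=
    hg1.continuousOn_deriv_of_isOpen hto le_rfl
  have hcont : ContinuousAt (deriv (deriv g)) 0 :=
    hdd.continuousAt (hto.mem_nhds h0t)
  have hev : ∀ᶠ x in nhds (0:ℝ), 0 < deriv (deriv g) x :=
    ContinuousAt.eventually_lt continuousAt_const hcont h
  obtain ⟨δ, hδ, hball⟩ := Metric.eventually_nhds_iff_ball.mp
    (hev.and ((hto.eventually_mem h0t).and hmax))
  have hball_eq : Metric.ball (0:ℝ) δ = Ioo (-δ) δ := by
    simp [Real.ball_eq_Ioo]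
  have hsub : Ioo (-δ) δ ⊆ t := fun x hx => (hball x (by rwa [hball_eq])).2.1
  have hposd : ∀ x ∈ Ioo (-δ) δ, 0 < deriv (deriv g) x :=
    fun x hx => (hball x (by rwa [hball_eq])).1
  have hle : ∀ x ∈ Ioo (-δ) δ, g x ≤ g 0 :=
    fun x hx => (hball x (by rwa [hball_eq])).2.2
  have hmono : StrictMonoOn (deriv g) (Ioo (-δ) δ) := by
    apply strictMonoOn_of_deriv_pos (convex_Ioo _ _)
    · exact (hg1.continuousOn.mono hsub)
    · intro x hx
      rw [interior_Ioo] at hx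
      exact hposd x hx
  have hd0 : deriv g 0 = 0 := hmax.deriv_eq_zero
  have h0mem : (0:ℝ) ∈ Ioo (-δ) δ := by constructor <;> linarith
  have hderivpos : ∀ x ∈ Ioo (0:ℝ) (δ/2), 0 < deriv g x := by
    intro x hx
    have hxm : x ∈ Ioo (-δ) δ := ⟨by linarith [hx.1], by linarith [hx.2]⟩
    have := hmono h0mem hxm hx.1
    rwa [hd0] at this
  have hgmono : StrictMonoOn g (Icc (0:ℝ) (δ/2)) := by
    apply strictMonoOn_of_deriv_pos (convex_Icc _ _)
    · exact (hgt.continuousOn.mono (fun x hx => hsub ⟨by linarith [hx.1], by linarith [hx.2]⟩))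
    · intro x hx
      rw [interior_Icc] at hx
      exact hderivpos x hx
  have h1 : g (δ/4) > g 0 := by
    apply hgmono (by constructor <;> linarith) (by constructor <;> linarith)
    linarith
  have h2 : g (δ/4) ≤ g 0 := hle _ (by constructor <;> linarith)
  linarith

end helpers

section direst
variable {E' : Type*} [NormedAddCommGroup E'] [InnerProductSpace ℝ E']

lemma direction_estimate {u : E' → ℝ} {x₀ v : E'} {ρ W U p : ℝ}
    (hv : ‖v‖ = 1) (hW : 0 < W) (hWdef : W = ρ^2 - ‖x₀‖^2) (hU : U = u x₀)
    (hp : p = inner ℝ x₀ v)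
    (hu : ContDiffAt ℝ 2 u x₀)
    (hloc : IsLocalMax (fun y => (ρ^2 - ‖y‖^2)^2 * u y) x₀) :
    W^2 * (fderiv ℝ (fun y => fderiv ℝ u y v) x₀ v) ≤ 24*p^2*U + 4*W*U := by
  have h0 : (x₀ + (0:ℝ) • v) = x₀ := by simp
  set A0 : ℝ := fderiv ℝ u x₀ v with hA0def
  set Λ : ℝ := fderiv ℝ (fun y => fderiv ℝ u y v) x₀ v with hΛdef
  -- the polynomial b
  have hb : ∀ t : ℝ, HasDerivAt (fun s : ℝ => W - 2*p*s - s^2) (-(2*p) - 2*t) t := by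
    intro t
    have h2 : HasDerivAt (fun s : ℝ => 2*p*s) (2*p) t := by
      simpa using (hasDerivAt_id t).const_mul (2*p)
    have h3 : HasDerivAt (fun s : ℝ => s^2) (2*t) t := by
      simpa using hasDerivAt_pow 2 t
    have h4 := ((hasDerivAt_const t W).sub h2).sub h3
    exact h4.congr_deriv (by ring)
  -- norm identity
  have hnorm : ∀ t : ℝ, ρ^2 - ‖x₀ + t • v‖^2 = W - 2*p*t - t^2 := by
    intro t
    have := @norm_add_sq_real E' _ _ x₀ (t • v)
    rw [this, real_inner_smul_right, norm_smul, hWdef, hp, hv]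
    simp [Real.norm_eq_abs, mul_pow, sq_abs]
    ring
  -- the function q
  set q : ℝ → ℝ := fun t => (W - 2*p*t - t^2)^2 * u (x₀ + t • v) with hqdef
  have hqF : q = fun t => (ρ^2 - ‖x₀ + t • v‖^2)^2 * u (x₀ + t • v) := by
    funext t; rw [hnorm t]
  have hlocq : IsLocalMax q 0 := by
    rw [hqF]
    have hcont : ContinuousAt (fun t : ℝ => x₀ + t • v) 0 :=
      (continuous_const.add (continuous_id.smul continuous_const)).continuousAt
    have hloc' : IsLocalMax (fun y => (ρ^2 - ‖y‖^2)^2 * u y) ((fun t : ℝ => x₀ + t • v) 0) := by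
      simpa using hloc
    exact IsLocalMax.comp_continuous (f := fun y => (ρ^2 - ‖y‖^2)^2 * u y)
      (g := fun t : ℝ => x₀ + t • v) (b := (0:ℝ)) hloc' hcont
  have hqC2 : ContDiffAt ℝ 2 q 0 := by
    apply ContDiffAt.mul
    · exact ((((contDiff_const (c := W)).sub ((contDiff_const (c := 2*p)).mul contDiff_id)).sub
        (contDiff_id.pow 2)).pow 2).contDiffAt
    · exact line_contDiffAt v hu
  -- first derivative of q
  set R : ℝ → ℝ := fun t =>
      (2 * (W - 2*p*t - t^2) * (-(2*p) - 2*t)) * u (x₀ + t • v)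
        + (W - 2*p*t - t^2)^2 * (fderiv ℝ u (x₀ + t • v) v) with hRdef
  have hqd : ∀ᶠ t in nhds (0:ℝ), HasDerivAt q (R t) t := by
    filter_upwards [line_hasDerivAt_eventually v hu] with t ht
    have := ((hb t).pow 2).mul ht
    refine this.congr_deriv ?_
    simp only [hRdef, Pi.pow_apply]; push_cast; ring
  have hderiv_ev : deriv q =ᶠ[nhds (0:ℝ)] R := by
    filter_upwards [hqd] with t ht using ht.deriv
  -- first-order condition
  have hq'0 : deriv q 0 = 0 := hlocq.deriv_eq_zero
  have hR0 : R 0 = 0 := by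
    rw [← (hqd.self_of_nhds).deriv, hq'0]
  have hR0' : -(4*W*p*U) + W^2 * A0 = 0 := by
    have := hR0
    rw [hRdef] at this
    simp only [h0] at this
    rw [hU, hA0def]
    nlinarith [this]
  -- second derivative of R at 0
  have hA0 : HasDerivAt (fun t : ℝ => u (x₀ + t • v)) A0 0 := by
    have := (line_hasDerivAt_eventually v hu).self_of_nhds
    simpa [h0] using this
  have hAΛ : HasDerivAt (fun t : ℝ => fderiv ℝ u (x₀ + t • v) v) Λ 0 :=
    line_fderiv_hasDerivAt v hu
  have hlin : HasDerivAt (fun t : ℝ => -(2*p) - 2*t) (-2) 0 := by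
    have := (hasDerivAt_const (0:ℝ) (-(2*p))).sub ((hasDerivAt_id (0:ℝ)).const_mul 2)
    exact this.congr_deriv (by ring)
  have hR' : HasDerivAt R (8*p^2*U - 4*W*U - 8*W*p*A0 + W^2*Λ) 0 := by
    have t1 := ((((hb 0).const_mul 2).mul hlin).mul hA0).add (((hb 0).pow 2).mul hAΛ)
    have e : (fun t : ℝ => (2 * (W - 2*p*t - t^2)) * (-(2*p) - 2*t) * u (x₀ + t • v)
        + (W - 2*p*t - t^2)^2 * (fderiv ℝ u (x₀ + t • v) v)) = R := by
      funext t; rw [hRdef]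
    rw [← e]
    refine t1.congr_deriv ?_
    simp only [Pi.mul_apply, Pi.pow_apply, h0, ← hA0def, ← hU]
    push_cast
    ring
  -- conclude
  have htest : deriv (deriv q) 0 ≤ 0 := second_deriv_nonpos_of_isLocalMax hqC2 hlocq
  rw [hderiv_ev.deriv_eq, hR'.deriv] at htest
  have h6 : 8*p*(-(4*W*p*U) + W^2*A0) = 0 := by rw [hR0', mul_zero]
  have h7 : W*(W^2*Λ) ≤ W*(24*p^2*U + 4*W*U) := by
    nlinarith [mul_nonpos_of_nonneg_of_nonpos hW.le htest, h6]
  exact (mul_le_mul_iff_right₀ hW).mp h7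
end direst

/-- The Euclidean Laplacian of `u : ℝⁿ → ℝ`, i.e. the trace of the Hessian. -/
noncomputable def laplacian {n : ℕ} (u : EuclideanSpace ℝ (Fin n) → ℝ)
    (x : EuclideanSpace ℝ (Fin n)) : ℝ :=
  ∑ i : Fin n,
    fderiv ℝ (fun y => fderiv ℝ u y (EuclideanSpace.single i 1)) x
      (EuclideanSpace.single i 1)

/-- For `n ≥ 1` there is a constant `C > 0` depending only on `n` such that:
for every `ρ > 0` and every C² function `u ≥ 0` on the closed ball of radius `ρ`
centered at the origin of `ℝⁿ` satisfying `Δu ≥ (2/n)·u²` on the ball, one has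
`u(x) ≤ C·ρ²/(ρ² − |x|²)²` for all `x` with `|x| < ρ`. -/
theorem decay_estimate_on_ball
    {n : ℕ} (hn : 1 ≤ n) :
    ∃ C : ℝ, 0 < C ∧ ∀ ρ : ℝ, 0 < ρ →
      ∀ u : EuclideanSpace ℝ (Fin n) → ℝ,
        ContDiffOn ℝ 2 u (Metric.closedBall 0 ρ) →
        (∀ x ∈ Metric.closedBall (0 : EuclideanSpace ℝ (Fin n)) ρ, 0 ≤ u x) →
        (∀ x ∈ Metric.closedBall (0 : EuclideanSpace ℝ (Fin n)) ρ,
          laplacian u x ≥ (2 / (n : ℝ)) * (u x) ^ 2) →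
        ∀ x : EuclideanSpace ℝ (Fin n), ‖x‖ < ρ →
          u x ≤ C * ρ ^ 2 / (ρ ^ 2 - ‖x‖ ^ 2) ^ 2 := by
  set N : ℝ := (n : ℝ) with hNdef
  have hN1 : 1 ≤ N := by simpa [hNdef] using (Nat.one_le_cast (α := ℝ)).mpr hn
  have hNpos : 0 < N := by linarith
  refine ⟨2*N^2 + 12*N, by nlinarith, ?_⟩
  intro ρ hρ u hu hpos hineq
  set B := Metric.closedBall (0 : EuclideanSpace ℝ (Fin n)) ρ with hBdef
  set F : EuclideanSpace ℝ (Fin n) → ℝ := fun y => (ρ^2 - ‖y‖^2)^2 * u y with hFdef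
  have hFcont : ContinuousOn F B :=
    (((continuous_const.sub (continuous_norm.pow 2)).pow 2).continuousOn).mul hu.continuousOn
  obtain ⟨x₀, hx₀B, hmax⟩ := (isCompact_closedBall _ _).exists_isMaxOn
    ⟨0, Metric.mem_closedBall_self hρ.le⟩ hFcont
  -- key claim
  have hkey : F x₀ ≤ (2*N^2 + 12*N) * ρ^2 := by
    rcases le_or_gt (F x₀) 0 with hF0 | hF0
    · nlinarith
    · -- positive max, interior point
      set W : ℝ := ρ^2 - ‖x₀‖^2 with hWdef'
      set U : ℝ := u x₀ with hUdef
      have hx₀ρ : ‖x₀‖ ≤ ρ := by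
        have := hx₀B; rw [Metric.mem_closedBall, dist_zero_right] at this; exact this
      clear_value N B F
      rw [← hBdef] at hx₀B hmax
      have hWnn : 0 ≤ W := by nlinarith [norm_nonneg x₀]
      have hUnn : 0 ≤ U := hpos x₀ hx₀B
      have hW : 0 < W := by
        rcases hWnn.lt_or_eq with h | h
        · exact h
        · exfalso
          rw [hFdef] at hF0; simp only at hF0
          rw [show ρ^2 - ‖x₀‖^2 = 0 by linarith [hWdef']] at hF0
          simp at hF0
      have hU : 0 < U := by
        rcases hUnn.lt_or_eq with h | h
        · exact h
        · exfalso
          rw [hFdef] at hF0; simp only at hF0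
          rw [show u x₀ = 0 by rw [← hUdef, ← h]] at hF0
          simp at hF0
      clear_value W U
      have hx₀lt : ‖x₀‖ < ρ := by nlinarith [norm_nonneg x₀]
      have hball : Metric.ball (0 : EuclideanSpace ℝ (Fin n)) ρ ∈ nhds x₀ :=
        Metric.isOpen_ball.mem_nhds (by rwa [Metric.mem_ball, dist_zero_right])
      have hBnhds : B ∈ nhds x₀ := by
        rw [hBdef]; exact Filter.mem_of_superset hball Metric.ball_subset_closedBall
      have hux₀ : ContDiffAt ℝ 2 u x₀ := hu.contDiffAt hBnhds
      have hloc : IsLocalMax F x₀ := hmax.isLocalMax hBnhds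
      rw [hFdef] at hloc
      -- directional estimates
      have hdir : ∀ i : Fin n,
          W^2 * (fderiv ℝ (fun y => fderiv ℝ u y (EuclideanSpace.single i 1)) x₀
            (EuclideanSpace.single i 1))
          ≤ 24*(x₀ i)^2*U + 4*W*U := by
        intro i
        have hv : ‖(EuclideanSpace.single i (1:ℝ))‖ = 1 := by
          rw [EuclideanSpace.norm_single]; norm_num
        have hp : (x₀ i : ℝ) = inner ℝ x₀ (EuclideanSpace.single i (1:ℝ)) := by
          rw [EuclideanSpace.inner_single_right]; simp
        exact direction_estimate hv hW hWdef' hUdef hp hux₀ hloc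
      have hsum := Finset.sum_le_sum (fun i (_ : i ∈ Finset.univ) => hdir i)
      have hPars : ∑ i : Fin n, (x₀ i)^2 = ‖x₀‖^2 := by
        rw [EuclideanSpace.norm_eq, Real.sq_sqrt (by positivity)]
        simp [sq_abs]
      have hlhs : ∑ i : Fin n, W^2 * (fderiv ℝ (fun y => fderiv ℝ u y
            (EuclideanSpace.single i 1)) x₀ (EuclideanSpace.single i 1))
          = W^2 * laplacian u x₀ := by
        rw [laplacian, Finset.mul_sum]
      have hrhs : ∑ i : Fin n, (24*(x₀ i)^2*U + 4*W*U)
          = 24*‖x₀‖^2*U + N*(4*W*U) := by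
        rw [Finset.sum_add_distrib, Finset.sum_const, Finset.card_univ, Fintype.card_fin,
          nsmul_eq_mul]
        congr 1
        · rw [← hPars, Finset.mul_sum, Finset.sum_mul]
        · rw [hNdef]
      rw [hlhs, hrhs] at hsum
      -- PDE inequality
      have hlap := hineq x₀ hx₀B
      rw [ge_iff_le, div_mul_eq_mul_div, div_le_iff₀ hNpos] at hlap
      obtain ⟨lap, hlapd⟩ : ∃ l, laplacian u x₀ = l := ⟨_, rfl⟩
      rw [hlapd] at hsum hlap
      rw [← hUdef] at hlap
      -- combine
      have hm1 : 2*U^2*W^2 ≤ lap*N*W^2 :=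
        mul_le_mul_of_nonneg_right hlap (sq_nonneg W)
      have hWle : W ≤ ρ^2 := by nlinarith [sq_nonneg ‖x₀‖]
      have hnormle : ‖x₀‖^2 ≤ ρ^2 := by nlinarith
      have e1 : 24*‖x₀‖^2*U ≤ 24*ρ^2*U :=
        mul_le_mul_of_nonneg_right (by linarith : 24*‖x₀‖^2 ≤ 24*ρ^2) hUnn
      have e2 : N*(4*W*U) ≤ 4*N*ρ^2*U := by
        have hwu : W*U ≤ ρ^2*U := mul_le_mul_of_nonneg_right hWle hUnn
        nlinarith [mul_nonneg hNpos.le (sub_nonneg.mpr hwu)]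
      have hm2 : W^2 * lap ≤ 24*ρ^2*U + 4*N*ρ^2*U := by
        linarith [hsum, e1, e2]
      have hNm2 := mul_le_mul_of_nonneg_left hm2 hNpos.le
      have hc1 : U * (2*W^2*U) ≤ U * ((24*N + 4*N^2)*ρ^2) := by
        linarith [hm1, hNm2]
      have hc2 := (mul_le_mul_iff_right₀ hU).mp hc1
      have hgoal : W^2*U ≤ (2*N^2 + 12*N) * ρ^2 := by linarith [hc2]
      calc F x₀ = W^2 * U := by rw [hFdef]; simp only []; rw [hWdef', hUdef]
        _ ≤ (2*N^2 + 12*N) * ρ^2 := hgoal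
  -- conclusion
  intro x hx
  have hxB : x ∈ B := by
    rw [hBdef, Metric.mem_closedBall, dist_zero_right]; exact hx.le
  have hwx : 0 < ρ^2 - ‖x‖^2 := by nlinarith [norm_nonneg x]
  have hFx : F x ≤ F x₀ := hmax hxB
  rw [le_div_iff₀ (by positivity)]
  calc u x * (ρ^2 - ‖x‖^2)^2 = F x := by rw [hFdef]; ring
    _ ≤ F x₀ := hFx
    _ ≤ (2*N^2 + 12*N) * ρ^2 := hkey
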